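/- Let u_1, …, u_m be an orthonormal basis of ℝ^m, fix k < m and nonnegative reals λ_{k+1}, …, λ_m, and for t > 0 define C(t) = t Σ_{j=1}^k u_j u_jᵀ + Σ_{j=k+1}^m λ_j u_j u_jᵀ. Then for every v ∈ ℝ^m, as t → ∞, vᵀ (C(t) + I_m)⁻¹ v converges to Σ_{j=k+1}^m (u_jᵀ v)² / (λ_j + 1); in particular, if λ_j = 0 for all j > k, the limit equals ‖P_k⊥ v‖² where P_k⊥ = I_m − Σ_{j=1}^k u_j u_jᵀ. Thus spotlight inversion is the limit case of the Bayesian approximation error likelihood in which the k dominant eigenvalues of the error covariance are sent to infinity. -/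

import Mathlib

open Matrix Finset Filter Topology

lemma sum_mulVec' {m : ℕ} (s : Finset (Fin m)) (A : Fin m → Matrix (Fin m) (Fin m) ℝ)
    (v : Fin m → ℝ) : (∑ j ∈ s, A j) *ᵥ v = ∑ j ∈ s, A j *ᵥ v := by
  induction s using Finset.induction with
  | empty => simp
  | insert _ _ h ih => simp [Finset.sum_insert h, Matrix.add_mulVec, ih]

lemma dotProduct_sum' {m : ℕ} (s : Finset (Fin m)) (v : Fin m → ℝ) (w : Fin m → Fin m → ℝ) :
    v ⬝ᵥ (∑ j ∈ s, w j) = ∑ j ∈ s, v ⬝ᵥ w j := by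
  induction s using Finset.induction with
  | empty => simp
  | insert _ _ h ih => simp [Finset.sum_insert h, dotProduct_add, ih]

lemma vecMulVec_mulVec' {m : ℕ} (w x y : Fin m → ℝ) :
    vecMulVec w x *ᵥ y = (x ⬝ᵥ y) • w := by
  ext i
  simp only [vecMulVec_apply, mulVec, dotProduct, Pi.smul_apply, smul_eq_mul,
    Finset.sum_mul, Matrix.of_apply]
  exact Finset.sum_congr rfl (fun j _ => by ring)


/-- Euclidean norm of a vector in `ℝ^ι`. -/
noncomputable def eNorm {ι : Type*} [Fintype ι] (v : ι → ℝ) : ℝ :=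
  Real.sqrt (∑ i, v i ^ 2)

/-- Spotlight inversion as a limit case of the Bayesian approximation error likelihood:
with `C(t) = t Σ_{j≤k} u_j u_jᵀ + Σ_{j>k} λ_j u_j u_jᵀ`, for every `v` the quadratic form
`vᵀ (C(t) + I)⁻¹ v` converges, as `t → ∞`, to `Σ_{j>k} (u_jᵀ v)² / (λ_j + 1)`; and if
`λ_j = 0` for all `j > k` the limit equals `‖P_k⊥ v‖²`. -/
theorem spotlight_limit_of_bae (m k : ℕ) (hk : k < m)
    (u : Fin m → (Fin m → ℝ)) (lam : Fin m → ℝ)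
    (horth : ∀ a b, u a ⬝ᵥ u b = if a = b then (1 : ℝ) else 0)
    (hbasis : Submodule.span ℝ (Set.range u) = ⊤)
    (hnonneg : ∀ j : Fin m, k ≤ (j : ℕ) → 0 ≤ lam j) :
    ∀ v : Fin m → ℝ,
      Tendsto
        (fun t : ℝ =>
          v ⬝ᵥ (((t • ∑ j ∈ Finset.univ.filter (fun j : Fin m => (j : ℕ) < k),
                    vecMulVec (u j) (u j)
                + ∑ j ∈ Finset.univ.filter (fun j : Fin m => k ≤ (j : ℕ)),
                    lam j • vecMulVec (u j) (u j)) + 1)⁻¹ *ᵥ v))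
        atTop
        (𝓝 (∑ j ∈ Finset.univ.filter (fun j : Fin m => k ≤ (j : ℕ)),
              (u j ⬝ᵥ v) ^ 2 / (lam j + 1))) ∧
      ((∀ j : Fin m, k ≤ (j : ℕ) → lam j = 0) →
        (∑ j ∈ Finset.univ.filter (fun j : Fin m => k ≤ (j : ℕ)),
            (u j ⬝ᵥ v) ^ 2 / (lam j + 1))
          = eNorm ((1 - ∑ j ∈ Finset.univ.filter (fun j : Fin m => (j : ℕ) < k),
              vecMulVec (u j) (u j)) *ᵥ v) ^ 2) := by
  intro v
  set S1 : Matrix (Fin m) (Fin m) ℝ :=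
    ∑ j ∈ Finset.univ.filter (fun j : Fin m => (j : ℕ) < k), vecMulVec (u j) (u j) with hS1def
  set S2 : Matrix (Fin m) (Fin m) ℝ :=
    ∑ j ∈ Finset.univ.filter (fun j : Fin m => k ≤ (j : ℕ)), lam j • vecMulVec (u j) (u j)
    with hS2def
  set S2' : Matrix (Fin m) (Fin m) ℝ :=
    ∑ j ∈ Finset.univ.filter (fun j : Fin m => k ≤ (j : ℕ)),
      (lam j + 1)⁻¹ • vecMulVec (u j) (u j) with hS2'def
  set M : ℝ → Matrix (Fin m) (Fin m) ℝ := fun t => (t • S1 + S2) + 1 with hMdef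
  set N : ℝ → Matrix (Fin m) (Fin m) ℝ := fun t => (t + 1)⁻¹ • S1 + S2' with hNdef
  have hlb : ∀ (b : Fin m), k ≤ (b : ℕ) → lam b + 1 ≠ 0 := by
    intro b hb; have := hnonneg b hb; positivity
  -- action on basis vectors
  have hS1b : ∀ b, S1 *ᵥ u b = if (b : ℕ) < k then u b else 0 := by
    intro b
    rw [hS1def, sum_mulVec']
    simp only [vecMulVec_mulVec', horth, ite_smul, one_smul, zero_smul]
    rw [Finset.sum_ite_eq' _ b (fun j => u j)]
    simp
  have hS2b : ∀ b, S2 *ᵥ u b = if k ≤ (b : ℕ) then lam b • u b else 0 := by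
    intro b
    rw [hS2def, sum_mulVec']
    simp only [smul_mulVec, vecMulVec_mulVec', horth, ite_smul, one_smul, zero_smul,
      smul_ite, smul_zero]
    rw [Finset.sum_ite_eq' _ b (fun j => lam j • u j)]
    simp
  have hS2'b : ∀ b, S2' *ᵥ u b = if k ≤ (b : ℕ) then (lam b + 1)⁻¹ • u b else 0 := by
    intro b
    rw [hS2'def, sum_mulVec']
    simp only [smul_mulVec, vecMulVec_mulVec', horth, ite_smul, one_smul, zero_smul,
      smul_ite, smul_zero]
    rw [Finset.sum_ite_eq' _ b (fun j => (lam j + 1)⁻¹ • u j)]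
    simp
  have hMb : ∀ (t : ℝ) (b : Fin m),
      M t *ᵥ u b = (if (b : ℕ) < k then t + 1 else lam b + 1) • u b := by
    intro t b
    rw [hMdef]
    simp only [Matrix.add_mulVec, smul_mulVec, hS1b, hS2b, Matrix.one_mulVec]
    by_cases hbk : (b : ℕ) < k
    · simp [hbk, not_le.mpr hbk, add_smul, one_smul]
    · simp [hbk, not_lt.mp hbk, add_smul, one_smul]
  have hNb : ∀ (t : ℝ) (b : Fin m),
      N t *ᵥ u b = (if (b : ℕ) < k then t + 1 else lam b + 1)⁻¹ • u b := by
    intro t b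
    rw [hNdef]
    simp only [Matrix.add_mulVec, smul_mulVec, hS1b, hS2'b]
    by_cases hbk : (b : ℕ) < k
    · simp [hbk, not_le.mpr hbk]
    · simp [hbk, not_lt.mp hbk]
  have key : ∀ t : ℝ, 0 ≤ t → M t * N t = 1 := by
    intro t ht
    apply Matrix.toLin'.injective
    apply LinearMap.ext_on hbasis
    rintro x ⟨b, rfl⟩
    have hc : (if (b : ℕ) < k then t + 1 else lam b + 1) ≠ 0 := by
      split
      · positivity
      · exact hlb b (not_lt.mp (by assumption))
    rw [Matrix.toLin'_apply, Matrix.toLin'_one, LinearMap.id_apply, ← Matrix.mulVec_mulVec,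
      hNb, Matrix.mulVec_smul, hMb, smul_smul, inv_mul_cancel₀ hc, one_smul]
  -- quadratic form of N t
  have hqf : ∀ t : ℝ,
      v ⬝ᵥ (N t *ᵥ v)
        = (t + 1)⁻¹ * (∑ j ∈ Finset.univ.filter (fun j : Fin m => (j : ℕ) < k), (u j ⬝ᵥ v) ^ 2)
          + ∑ j ∈ Finset.univ.filter (fun j : Fin m => k ≤ (j : ℕ)),
              (u j ⬝ᵥ v) ^ 2 / (lam j + 1) := by
    intro t
    rw [hNdef]
    simp only [Matrix.add_mulVec, smul_mulVec, dotProduct_add,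
      dotProduct_smul, smul_eq_mul]
    congr 1
    · congr 1
      rw [hS1def, sum_mulVec', dotProduct_sum']
      refine Finset.sum_congr rfl fun j _ => ?_
      rw [vecMulVec_mulVec', dotProduct_smul, smul_eq_mul, dotProduct_comm, sq]
    · rw [hS2'def, sum_mulVec', dotProduct_sum']
      refine Finset.sum_congr rfl fun j _ => ?_
      rw [smul_mulVec, vecMulVec_mulVec', dotProduct_smul, dotProduct_smul,
        smul_eq_mul, smul_eq_mul, dotProduct_comm, div_eq_mul_inv, sq]
      ring
  constructor
  · -- the limit
    have hcong : (fun t : ℝ =>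
          v ⬝ᵥ ((M t)⁻¹ *ᵥ v)) =ᶠ[atTop]
        (fun t : ℝ =>
          (t + 1)⁻¹ * (∑ j ∈ Finset.univ.filter (fun j : Fin m => (j : ℕ) < k), (u j ⬝ᵥ v) ^ 2)
          + ∑ j ∈ Finset.univ.filter (fun j : Fin m => k ≤ (j : ℕ)),
              (u j ⬝ᵥ v) ^ 2 / (lam j + 1)) := by
      filter_upwards [eventually_ge_atTop (0 : ℝ)] with t ht
      rw [Matrix.inv_eq_right_inv (key t ht), hqf t]
    refine Tendsto.congr' hcong.symm ?_
    have h0 : Tendsto (fun t : ℝ => (t + 1)⁻¹) atTop (𝓝 0) :=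
      tendsto_inv_atTop_zero.comp (tendsto_atTop_add_const_right atTop 1 tendsto_id)
    have := (h0.mul_const
      (∑ j ∈ Finset.univ.filter (fun j : Fin m => (j : ℕ) < k), (u j ⬝ᵥ v) ^ 2)).add_const
      (∑ j ∈ Finset.univ.filter (fun j : Fin m => k ≤ (j : ℕ)), (u j ⬝ᵥ v) ^ 2 / (lam j + 1))
    simpa using this
  · -- the spotlight identity
    intro hz
    -- 1 - S1 = sum over j ≥ k of projectors
    have hone : (∑ j : Fin m, vecMulVec (u j) (u j)) = 1 := by
      apply Matrix.toLin'.injective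
      apply LinearMap.ext_on hbasis
      rintro x ⟨b, rfl⟩
      rw [Matrix.toLin'_apply, Matrix.toLin'_one, LinearMap.id_apply, sum_mulVec']
      simp only [vecMulVec_mulVec', horth, ite_smul, one_smul, zero_smul]
      rw [Finset.sum_ite_eq' _ b (fun j => u j)]
      simp
    have hsplit : S1 + (∑ j ∈ Finset.univ.filter (fun j : Fin m => k ≤ (j : ℕ)),
        vecMulVec (u j) (u j)) = 1 := by
      rw [hS1def, ← hone]
      rw [show Finset.univ.filter (fun j : Fin m => k ≤ (j : ℕ))
          = Finset.univ.filter (fun j : Fin m => ¬ (j : ℕ) < k) by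
        apply Finset.filter_congr; intro j _; simp [not_lt]]
      exact Finset.sum_filter_add_sum_filter_not _ _ _
    have h1S1 : (1 : Matrix (Fin m) (Fin m) ℝ) - S1
        = ∑ j ∈ Finset.univ.filter (fun j : Fin m => k ≤ (j : ℕ)), vecMulVec (u j) (u j) := by
      rw [← hsplit, add_sub_cancel_left]
    rw [h1S1, sum_mulVec']
    simp only [vecMulVec_mulVec']
    set s := Finset.univ.filter (fun j : Fin m => k ≤ (j : ℕ)) with hs
    set w : Fin m → ℝ := ∑ j ∈ s, (u j ⬝ᵥ v) • u j with hw
    have hww : w ⬝ᵥ w = ∑ j ∈ s, (u j ⬝ᵥ v) ^ 2 := by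
      rw [hw, dotProduct_sum']
      refine Finset.sum_congr rfl fun a ha => ?_
      rw [dotProduct_comm, smul_dotProduct, dotProduct_sum']
      simp only [dotProduct_smul, smul_eq_mul, horth, mul_ite, mul_one, mul_zero]
      rw [Finset.sum_ite_eq _ a (fun j => u j ⬝ᵥ v), if_pos ha, sq]
    have hne : eNorm w ^ 2 = w ⬝ᵥ w := by
      rw [eNorm, Real.sq_sqrt (by positivity)]
      simp [dotProduct, sq]
    rw [hne, hww]
    refine Finset.sum_congr rfl fun j hj => ?_
    rw [hz j (by simpa using (Finset.mem_filter.mp hj).2)]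
    simp
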